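/- If A is a row-stochastic n×n matrix all of whose entries are at least β > 0, and v = A u, then max_i v_i − min_i v_i ≤ (1 − nβ)(max_i u_i − min_i u_i). -/
import Mathlib


/-- If `A` is a row-stochastic `n × n` matrix all of whose entries are at least `β > 0`,
and `v = A u`, then `max v - min v ≤ (1 - nβ)(max u - min u)`. -/
theorem stmt0 {n : ℕ} (hn : 0 < n) (A : Matrix (Fin n) (Fin n) ℝ) (β : ℝ) (hβ : 0 < β)
    (hAβ : ∀ i j, β ≤ A i j) (hrow : ∀ i, ∑ j, A i j = 1)
    (u v : Fin n → ℝ) (hv : v = A.mulVec u) :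
    (⨆ i, v i) - (⨅ i, v i) ≤ (1 - n * β) * ((⨆ i, u i) - (⨅ i, u i)) := by
  have : NeZero n := ⟨hn.ne'⟩
  set M : ℝ := ⨆ i, u i with hM
  set m : ℝ := ⨅ i, u i with hm
  have hbddA : BddAbove (Set.range u) := Set.Finite.bddAbove (Set.finite_range u)
  have hbddB : BddBelow (Set.range u) := Set.Finite.bddBelow (Set.finite_range u)
  have huM : ∀ j, u j ≤ M := fun j => le_ciSup hbddA j
  have hmu : ∀ j, m ≤ u j := fun j => ciInf_le hbddB j
  -- 1 - n β ≥ 0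
  have hsum : ∀ i, ∑ j, (A i j - β) = 1 - n * β := by
    intro i
    simp [Finset.sum_sub_distrib, hrow i, mul_comm]
  have hnb : (0:ℝ) ≤ 1 - n * β := by
    have := hsum ⟨0, hn⟩
    rw [← this]
    exact Finset.sum_nonneg fun j _ => sub_nonneg.2 (hAβ _ j)
  -- key bounds
  have key : ∀ i k, v i - v k ≤ (1 - n * β) * (M - m) := by
    intro i k
    have hup : v i ≤ (1 - n * β) * M + β * ∑ j, u j := by
      rw [hv]
      have : A.mulVec u i = ∑ j, (A i j - β) * u j + β * ∑ j, u j := by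
        simp [Matrix.mulVec, dotProduct, sub_mul, Finset.sum_sub_distrib,
          Finset.mul_sum]
      rw [this]
      have h1 : ∑ j, (A i j - β) * u j ≤ ∑ j, (A i j - β) * M :=
        Finset.sum_le_sum fun j _ =>
          mul_le_mul_of_nonneg_left (huM j) (sub_nonneg.2 (hAβ i j))
      have h2 : ∑ j, (A i j - β) * M = (1 - n * β) * M := by
        rw [← Finset.sum_mul, hsum i]
      linarith
    have hlo : (1 - n * β) * m + β * ∑ j, u j ≤ v k := by
      rw [hv]
      have : A.mulVec u k = ∑ j, (A k j - β) * u j + β * ∑ j, u j := by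
        simp [Matrix.mulVec, dotProduct, sub_mul, Finset.sum_sub_distrib,
          Finset.mul_sum]
      rw [this]
      have h1 : ∑ j, (A k j - β) * m ≤ ∑ j, (A k j - β) * u j :=
        Finset.sum_le_sum fun j _ =>
          mul_le_mul_of_nonneg_left (hmu j) (sub_nonneg.2 (hAβ k j))
      have h2 : ∑ j, (A k j - β) * m = (1 - n * β) * m := by
        rw [← Finset.sum_mul, hsum k]
      linarith
    have := sub_le_sub hup hlo
    calc v i - v k ≤ ((1 - n * β) * M + β * ∑ j, u j) - ((1 - n * β) * m + β * ∑ j, u j) := this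
      _ = (1 - n * β) * (M - m) := by ring
  rw [sub_le_iff_le_add]
  refine ciSup_le fun i => ?_
  have h : v i - (1 - n * β) * (M - m) ≤ ⨅ k, v k :=
    le_ciInf fun k => by linarith [key i k]
  linarith
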